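/- Let K be a field of characteristic zero and let n ≥ 2. In L = FreeLieAlgebra K (Fin n), the K-submodule spanned by all multilinear Lie monomials supported on all of Fin n (defined inductively: ι i is a multilinear monomial supported on {i}, and ⁅y,z⁆ is a multilinear monomial supported on s₁ ∪ s₂ whenever y, z are multilinear monomials supported on disjoint nonempty sets s₁, s₂) has finite dimension equal to (n-1)!. -/

import Mathlib

/-- Multilinear Lie monomials in `FreeLieAlgebra K (Fin n)`, supported on a (nonempty)
finite subset of `Fin n`: a generator `ι i` is supported on `{i}`, and the bracket of
monomials supported on disjoint nonempty sets `s₁`, `s₂` is supported on `s₁ ∪ s₂`. -/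
inductive IsMultilinearMonomial (K : Type*) [Field K] (n : ℕ) :
    FreeLieAlgebra K (Fin n) → Finset (Fin n) → Prop
  | of (i : Fin n) : IsMultilinearMonomial K n (FreeLieAlgebra.of K i) {i}
  | bracket {y z : FreeLieAlgebra K (Fin n)} {s₁ s₂ : Finset (Fin n)} :
      IsMultilinearMonomial K n y s₁ → IsMultilinearMonomial K n z s₂ →
      s₁.Nonempty → s₂.Nonempty → Disjoint s₁ s₂ →
      IsMultilinearMonomial K n ⁅y, z⁆ (s₁ ∪ s₂)

namespace DimMultilinearAux

open FreeLieAlgebra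

variable (K : Type*) [Field K] {n : ℕ}

attribute [local instance] LieRing.ofAssociativeRing

/-- Right-normed bracket word `[a₁,[a₂,[…,[a_k, i₀]…]]]`. -/
noncomputable def rn (l : List (Fin n)) (i₀ : Fin n) : FreeLieAlgebra K (Fin n) :=
  l.foldr (fun a w => ⁅of K a, w⁆) (of K i₀)

@[simp] lemma rn_nil (i₀ : Fin n) : rn K [] i₀ = of K i₀ := rfl

@[simp] lemma rn_cons (a : Fin n) (l : List (Fin n)) (i₀ : Fin n) :
    rn K (a :: l) i₀ = ⁅of K a, rn K l i₀⁆ := rfl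

/-- The set of right-normed words with letters `s.erase i₀`, ending in `i₀`. -/
def RS (s : Finset (Fin n)) (i₀ : Fin n) : Set (FreeLieAlgebra K (Fin n)) :=
  {x | ∃ l : List (Fin n), l.Nodup ∧ l.toFinset = s.erase i₀ ∧ x = rn K l i₀}

lemma rn_isMono (i₀ : Fin n) :
    ∀ l : List (Fin n), l.Nodup → i₀ ∉ l →
      IsMultilinearMonomial K n (rn K l i₀) (insert i₀ l.toFinset)
  | [] , _, _ => by simpa using IsMultilinearMonomial.of (K := K) i₀
  | a :: l, hnd, hi => by
    have hal : a ∉ l := (List.nodup_cons.1 hnd).1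
    have hi' : i₀ ∉ l := fun h => hi (List.mem_cons_of_mem _ h)
    have hia : a ≠ i₀ := fun h => hi (h ▸ List.mem_cons_self)
    have h1 : IsMultilinearMonomial K n (rn K l i₀) (insert i₀ l.toFinset) :=
      rn_isMono i₀ l (List.nodup_cons.1 hnd).2 hi'
    have h2 := IsMultilinearMonomial.bracket (IsMultilinearMonomial.of (K := K) a) h1
      (Finset.singleton_nonempty a) (Finset.insert_nonempty _ _)
      (by
        simp only [Finset.disjoint_singleton_left, Finset.mem_insert, List.mem_toFinset]
        push_neg
        exact ⟨hia, hal⟩)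
    have : ({a} : Finset (Fin n)) ∪ insert i₀ l.toFinset
        = insert i₀ (a :: l).toFinset := by
      ext x
      simp only [Finset.mem_union, Finset.mem_singleton, Finset.mem_insert,
        List.toFinset_cons, List.mem_toFinset]
      tauto
    rw [this] at h2
    simpa using h2

lemma bracket_rn_mem {y : FreeLieAlgebra K (Fin n)} {s₁ : Finset (Fin n)}
    (hy : IsMultilinearMonomial K n y s₁) :
    ∀ (s₂ : Finset (Fin n)) (i₀ : Fin n) (l : List (Fin n)), Disjoint s₁ s₂ → i₀ ∈ s₂ →
      l.Nodup → l.toFinset = s₂.erase i₀ →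
      ⁅y, rn K l i₀⁆ ∈ Submodule.span K (RS K (s₁ ∪ s₂) i₀) := by
  induction hy with
  | of i =>
    intro s₂ i₀ l hdis hi₀ hnd htf
    have hi : i ∉ s₂ := Finset.disjoint_singleton_left.1 hdis
    have hii₀ : i ≠ i₀ := fun h => hi (h ▸ hi₀)
    have hil : i ∉ l := fun h => hi (Finset.mem_of_mem_erase (htf ▸ List.mem_toFinset.2 h))
    apply Submodule.subset_span
    refine ⟨i :: l, List.nodup_cons.2 ⟨hil, hnd⟩, ?_, rfl⟩
    ext x
    simp only [List.toFinset_cons, Finset.mem_insert, List.mem_toFinset, Finset.mem_erase,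
      Finset.mem_union, Finset.mem_singleton]
    constructor
    · rintro (rfl | hx)
      · exact ⟨hii₀, Or.inl rfl⟩
      · have := htf ▸ List.mem_toFinset.2 hx
        exact ⟨(Finset.mem_erase.1 this).1, Or.inr (Finset.mem_of_mem_erase this)⟩
    · rintro ⟨hxi₀, rfl | hx⟩
      · exact Or.inl rfl
      · exact Or.inr (List.mem_toFinset.1 (htf ▸ Finset.mem_erase.2 ⟨hxi₀, hx⟩))
  | bracket hy1 hz1 hn1 hn2 hdis12 ihy ihz =>
    rename_i y z t₁ t₂
    intro s₂ i₀ l hdis hi₀ hnd htf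
    have hd1 : Disjoint t₁ s₂ := (Finset.disjoint_union_left.1 hdis).1
    have hd2 : Disjoint t₂ s₂ := (Finset.disjoint_union_left.1 hdis).2
    rw [lie_lie]
    have key : ∀ (u : FreeLieAlgebra K (Fin n)) (t t' : Finset (Fin n)),
        (∀ (s₂' : Finset (Fin n)) (i₀' : Fin n) (l' : List (Fin n)), Disjoint t s₂' → i₀' ∈ s₂' →
          l'.Nodup → l'.toFinset = s₂'.erase i₀' →
          ⁅u, rn K l' i₀'⁆ ∈ Submodule.span K (RS K (t ∪ s₂') i₀')) →
        Disjoint t (t' ∪ s₂) → i₀ ∈ t' ∪ s₂ →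
        ∀ v ∈ Submodule.span K (RS K (t' ∪ s₂) i₀),
          ⁅u, v⁆ ∈ Submodule.span K (RS K (t ∪ (t' ∪ s₂)) i₀) := by
      intro u t t' ihu hdt hit v hv
      induction hv using Submodule.span_induction with
      | mem x hx =>
        obtain ⟨l', hnd', htf', rfl⟩ := hx
        exact ihu (t' ∪ s₂) i₀ l' hdt hit hnd' htf'
      | zero => simp
      | add x y' _ _ hx hy' => rw [lie_add]; exact add_mem hx hy'
      | smul c x _ hx => rw [lie_smul]; exact Submodule.smul_mem _ _ hx
    have hz' : ⁅z, rn K l i₀⁆ ∈ Submodule.span K (RS K (t₂ ∪ s₂) i₀) :=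
      ihz s₂ i₀ l hd2 hi₀ hnd htf
    have hy' : ⁅y, rn K l i₀⁆ ∈ Submodule.span K (RS K (t₁ ∪ s₂) i₀) :=
      ihy s₂ i₀ l hd1 hi₀ hnd htf
    have h1 : ⁅y, ⁅z, rn K l i₀⁆⁆ ∈ Submodule.span K (RS K (t₁ ∪ (t₂ ∪ s₂)) i₀) :=
      key y t₁ t₂ ihy (by rw [Finset.disjoint_union_right]; exact ⟨hdis12, hd1⟩)
        (Finset.mem_union_right _ hi₀) _ hz'
    have h2 : ⁅z, ⁅y, rn K l i₀⁆⁆ ∈ Submodule.span K (RS K (t₂ ∪ (t₁ ∪ s₂)) i₀) :=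
      key z t₂ t₁ ihz (by rw [Finset.disjoint_union_right]; exact ⟨hdis12.symm, hd2⟩)
        (Finset.mem_union_right _ hi₀) _ hy'
    have e1 : t₁ ∪ (t₂ ∪ s₂) = t₁ ∪ t₂ ∪ s₂ := (Finset.union_assoc _ _ _).symm
    have e2 : t₂ ∪ (t₁ ∪ s₂) = t₁ ∪ t₂ ∪ s₂ := by
      rw [← Finset.union_assoc, Finset.union_comm t₂ t₁]
    rw [e1] at h1; rw [e2] at h2
    exact sub_mem h1 h2

lemma mono_mem_span_RS {y : FreeLieAlgebra K (Fin n)} {s : Finset (Fin n)}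
    (hy : IsMultilinearMonomial K n y s) :
    ∀ i₀ ∈ s, y ∈ Submodule.span K (RS K s i₀) := by
  induction hy with
  | of i =>
    intro i₀ hi₀
    rcases Finset.mem_singleton.1 hi₀ with rfl
    exact Submodule.subset_span ⟨[], List.nodup_nil, by simp, rfl⟩
  | bracket hy1 hz1 hn1 hn2 hdis ihy ihz =>
    rename_i y z s₁ s₂
    intro i₀ hi₀
    have key : ∀ (u : FreeLieAlgebra K (Fin n)) (t t' : Finset (Fin n)),
        IsMultilinearMonomial K n u t → Disjoint t t' → i₀ ∈ t' →
        ∀ v ∈ Submodule.span K (RS K t' i₀),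
          ⁅u, v⁆ ∈ Submodule.span K (RS K (t ∪ t') i₀) := by
      intro u t t' hu hdt hit v hv
      induction hv using Submodule.span_induction with
      | mem x hx =>
        obtain ⟨l', hnd', htf', rfl⟩ := hx
        exact bracket_rn_mem K hu t' i₀ l' hdt hit hnd' htf'
      | zero => simp
      | add x y' _ _ hx hy' => rw [lie_add]; exact add_mem hx hy'
      | smul c x _ hx => rw [lie_smul]; exact Submodule.smul_mem _ _ hx
    rcases Finset.mem_union.1 hi₀ with h1 | h2
    · have hz' := key z s₂ s₁ hz1 hdis.symm h1 y (ihy i₀ h1)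
      rw [Finset.union_comm s₂ s₁] at hz'
      rw [← lie_skew]
      exact neg_mem hz'
    · exact key y s₁ s₂ hy1 hdis h2 z (ihz i₀ h2)

/-- The canonical Lie algebra morphism to the free associative algebra. -/
noncomputable def φ : FreeLieAlgebra K (Fin n) →ₗ⁅K⁆ FreeAlgebra K (Fin n) :=
  FreeLieAlgebra.lift K (FreeAlgebra.ι K)

lemma φ_of (i : Fin n) : φ K (of K i) = FreeAlgebra.ι K i := by
  rw [φ]; exact FreeLieAlgebra.lift_of_apply _ _

/-- The coefficient of the word `w` in the image of `x` in the free associative algebra. -/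
noncomputable def coeff (w : List (Fin n)) (x : FreeLieAlgebra K (Fin n)) : K :=
  (FreeAlgebra.equivMonoidAlgebraFreeMonoid (φ K x)).coeff (FreeMonoid.ofList w)

lemma psi_of (i : Fin n) :
    FreeAlgebra.equivMonoidAlgebraFreeMonoid (φ K (of K i))
      = MonoidAlgebra.single (FreeMonoid.of i) (1 : K) := by
  rw [φ_of]
  simp [FreeAlgebra.equivMonoidAlgebraFreeMonoid, MonoidAlgebra.of_apply]

lemma coeff_rn : ∀ (l : List (Fin n)) (i₀ : Fin n), i₀ ∉ l →
    ∀ w : List (Fin n), w.getLast? = some i₀ →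
      coeff K w (rn K l i₀) = if w = l ++ [i₀] then 1 else 0
  | [], i₀, _, w, hw => by
    classical
    have hiff : (FreeMonoid.of i₀ = FreeMonoid.ofList w) ↔ (w = [] ++ [i₀]) := by
      constructor
      · intro h; simpa using congrArg FreeMonoid.toList h.symm
      · rintro rfl; rfl
    rw [coeff, rn_nil, psi_of, MonoidAlgebra.coeff_single, Finsupp.single_apply, if_congr hiff rfl rfl]
  | a :: l, i₀, hi, w, hw => by
    have hai₀ : a ≠ i₀ := fun h => hi (h ▸ List.mem_cons_self)
    have hil : i₀ ∉ l := fun h => hi (List.mem_cons_of_mem _ h)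
    have hbr : φ K (rn K (a :: l) i₀)
        = FreeAlgebra.ι K a * φ K (rn K l i₀) - φ K (rn K l i₀) * FreeAlgebra.ι K a := by
      rw [rn_cons, LieHom.map_lie, Ring.lie_def, φ_of]
    set ψ := (FreeAlgebra.equivMonoidAlgebraFreeMonoid :
      FreeAlgebra K (Fin n) ≃ₐ[K] MonoidAlgebra K (FreeMonoid (Fin n))) with hψ
    set p : MonoidAlgebra K (FreeMonoid (Fin n)) := ψ (φ K (rn K l i₀)) with hp
    have hψa : ψ (FreeAlgebra.ι K a) = MonoidAlgebra.single (FreeMonoid.of a) (1 : K) := by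
      rw [hψ, ← psi_of K a, φ_of]
    have hcoeff : coeff K w (rn K (a :: l) i₀)
        = (MonoidAlgebra.single (FreeMonoid.of a) (1 : K) * p
            - p * MonoidAlgebra.single (FreeMonoid.of a) (1 : K)).coeff (FreeMonoid.ofList w) := by
      rw [coeff, hbr, map_sub, map_mul, map_mul, hψa, ← hp]
    rw [hcoeff, MonoidAlgebra.coeff_sub, Finsupp.sub_apply]
    have hright : (p * MonoidAlgebra.single (FreeMonoid.of a) (1 : K)).coeff
        (FreeMonoid.ofList w) = 0 := by
      apply MonoidAlgebra.mul_single_apply_of_not_exists_mul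
      rintro ⟨d, hd⟩
      have : w = FreeMonoid.toList d ++ [a] := congrArg FreeMonoid.toList hd
      rw [this, List.getLast?_concat] at hw
      exact hai₀ (Option.some.inj hw)
    rw [hright, sub_zero]
    match w, hw with
    | [], hw => simp at hw
    | b :: w', hw =>
      by_cases hba : b = a
      · subst hba
        have hne : w' ≠ [] := by
          rintro rfl
          simp only [List.getLast?_singleton] at hw
          exact hai₀ (Option.some.inj hw)
        have hw' : w'.getLast? = some i₀ := by
          obtain ⟨c, w'', rfl⟩ := List.exists_cons_of_ne_nil hne
          rwa [List.getLast?_cons_cons] at hw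
        have hH : ∀ u : FreeMonoid (Fin n),
            FreeMonoid.of b * u = FreeMonoid.ofList (b :: w') ↔ u = FreeMonoid.ofList w' := by
          intro u
          constructor
          · intro h
            have : b :: FreeMonoid.toList u = b :: w' := congrArg FreeMonoid.toList h
            exact congrArg FreeMonoid.ofList (List.cons.injEq _ _ _ _ ▸ this).2
          · rintro rfl; rfl
        rw [MonoidAlgebra.single_mul_apply_aux (FreeMonoid.ofList w') (fun u _ => hH u), one_mul, hp]
        have := coeff_rn l i₀ hil w' hw'
        rw [coeff] at this
        rw [this]
        by_cases h : w' = l ++ [i₀]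
        · simp [h]
        · have : b :: w' ≠ b :: l ++ [i₀] := by
            simp only [List.cons_append, ne_eq, List.cons.injEq, not_and]
            intro _; exact h
          simp [h]
      · have hzero : (MonoidAlgebra.single (FreeMonoid.of a) (1 : K) * p).coeff
            (FreeMonoid.ofList (b :: w')) = 0 := by
          apply MonoidAlgebra.single_mul_apply_of_not_exists_mul
          rintro ⟨d, hd⟩
          have : b :: w' = a :: FreeMonoid.toList d := congrArg FreeMonoid.toList hd
          exact hba (List.cons.injEq _ _ _ _ ▸ this).1
        rw [hzero]
        simp [hba]

/-- The coefficient functional, as a linear map. -/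
noncomputable def coeffL (w : List (Fin n)) : FreeLieAlgebra K (Fin n) →ₗ[K] K :=
  (Finsupp.lapply (FreeMonoid.ofList w)).comp
    ((MonoidAlgebra.coeffLinearEquiv K).toLinearMap.comp
    ((FreeAlgebra.equivMonoidAlgebraFreeMonoid :
        FreeAlgebra K (Fin n) ≃ₐ[K] MonoidAlgebra K (FreeMonoid (Fin n))).toLinearMap.comp
      (φ K).toLinearMap))

lemma coeffL_apply (w : List (Fin n)) (x : FreeLieAlgebra K (Fin n)) :
    coeffL K w x = coeff K w x := rfl

end DimMultilinearAux

open DimMultilinearAux in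
/-- `dim Lie(n) = (n-1)!` : the `K`-submodule of `FreeLieAlgebra K (Fin n)` (`n = m+2 ≥ 2`)
spanned by the multilinear Lie monomials supported on all of `Fin n` is finite-dimensional
of dimension `(n-1)!`. -/
theorem dim_multilinear_part_eq_factorial (K : Type*) [Field K] [CharZero K] (m : ℕ)
    (M : Submodule K (FreeLieAlgebra K (Fin (m + 2))))
    (hM : M = Submodule.span K
      {x : FreeLieAlgebra K (Fin (m + 2)) | IsMultilinearMonomial K (m + 2) x Finset.univ}) :
    FiniteDimensional K M ∧ Module.finrank K M = Nat.factorial (m + 1) := by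
  classical
  set i₀ : Fin (m + 2) := Fin.last (m + 1) with hi₀def
  -- the candidate basis, indexed by permutations
  set wlist : Equiv.Perm (Fin (m + 1)) → List (Fin (m + 2)) :=
    fun σ => List.ofFn (fun j => Fin.castSucc (σ j)) with hwlist
  set b : Equiv.Perm (Fin (m + 1)) → FreeLieAlgebra K (Fin (m + 2)) :=
    fun σ => rn K (wlist σ) i₀ with hb
  have hwlist_nodup : ∀ σ, (wlist σ).Nodup := by
    intro σ
    rw [hwlist, List.nodup_ofFn]
    exact Fin.castSucc_injective _ |>.comp σ.injective
  have hi₀_not_mem : ∀ σ, i₀ ∉ wlist σ := by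
    intro σ h
    rw [hwlist, List.mem_ofFn] at h
    obtain ⟨j, hj⟩ := h
    exact absurd hj (Fin.ne_last_of_lt (Fin.castSucc_lt_last _) : Fin.castSucc (σ j) ≠ i₀)
  have hwlist_toFinset : ∀ σ, (wlist σ).toFinset = Finset.univ.erase i₀ := by
    intro σ
    ext x
    simp only [List.mem_toFinset, Finset.mem_erase, Finset.mem_univ, and_true, hwlist,
      List.mem_ofFn, Set.mem_range]
    constructor
    · rintro ⟨j, rfl⟩
      exact Fin.ne_last_of_lt (Fin.castSucc_lt_last _)
    · intro hx
      have hx' : x ≠ Fin.last (m + 1) := hx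
      refine ⟨σ.symm (x.castPred hx'), ?_⟩
      simp
  -- The range of b is exactly RS univ i₀
  have hRS : RS K (Finset.univ : Finset (Fin (m + 2))) i₀ = Set.range b := by
    ext x
    constructor
    · rintro ⟨l, hnd, htf, rfl⟩
      -- produce a permutation
      have hlen : l.length = m + 1 := by
        have h1 : l.toFinset.card = l.length := List.toFinset_card_of_nodup hnd
        have h2 : (Finset.univ.erase i₀ : Finset (Fin (m + 2))).card = m + 1 := by
          rw [Finset.card_erase_of_mem (Finset.mem_univ _), Finset.card_univ,
            Fintype.card_fin]
          omega
        rw [← h1, htf, h2]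
      have hmem : ∀ j : Fin (m + 1), l.get (Fin.cast hlen.symm j) ≠ Fin.last (m + 1) := by
        intro j
        have : l.get (Fin.cast hlen.symm j) ∈ l.toFinset :=
          List.mem_toFinset.2 (l.get_mem _)
        rw [htf] at this
        exact (Finset.mem_erase.1 this).1
      set f : Fin (m + 1) → Fin (m + 1) :=
        fun j => (l.get (Fin.cast hlen.symm j)).castPred (hmem j) with hf
      have hfinj : Function.Injective f := by
        intro j₁ j₂ h
        have := congrArg Fin.castSucc h
        simp only [hf, Fin.castSucc_castPred] at this
        have hget : l.get (Fin.cast hlen.symm j₁) = l.get (Fin.cast hlen.symm j₂) := this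
        have hginj := List.nodup_iff_injective_get.1 hnd hget
        exact Fin.cast_injective _ (by exact hginj)
      have hfbij : Function.Bijective f := (Finite.injective_iff_bijective).1 hfinj
      have hwl : List.ofFn (fun j => Fin.castSucc ((Equiv.ofBijective f hfbij) j)) = l := by
        apply List.ext_get (by simp [hlen])
        intro i hi1 hi2
        rw [List.get_ofFn]
        show Fin.castSucc (Fin.castPred _ (hmem _)) = l.get ⟨i, hi2⟩
        rw [Fin.castSucc_castPred]
        exact congrArg l.get (Fin.ext (by rfl))
      refine ⟨Equiv.ofBijective f hfbij, ?_⟩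
      show rn K (List.ofFn fun j => Fin.castSucc ((Equiv.ofBijective f hfbij) j)) i₀
        = rn K l i₀
      rw [hwl]
    · rintro ⟨σ, rfl⟩
      exact ⟨wlist σ, hwlist_nodup σ, hwlist_toFinset σ, rfl⟩
  -- b is linearly independent via coefficients in the free associative algebra
  have hbindep : LinearIndependent K b := by
    rw [Fintype.linearIndependent_iff]
    intro g hg τ
    have happ := congrArg (coeffL K (wlist τ ++ [i₀])) hg
    rw [map_sum, map_zero] at happ
    have hcoeffs : ∀ σ, coeffL K (wlist τ ++ [i₀]) (g σ • b σ)
        = if σ = τ then g σ else 0 := by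
      intro σ
      rw [map_smul, coeffL_apply, hb]
      have hlast : (wlist τ ++ [i₀]).getLast? = some i₀ := List.getLast?_concat
      rw [coeff_rn K (wlist σ) i₀ (hi₀_not_mem σ) _ hlast]
      have hiff : (wlist τ ++ [i₀] = wlist σ ++ [i₀]) ↔ σ = τ := by
        constructor
        · intro h
          have h' : wlist τ = wlist σ := by
            have := List.append_inj_left h (by simp [hwlist])
            exact this
          rw [hwlist] at h'
          have := List.ofFn_inj.1 h'
          ext j
          exact congrArg Fin.val (Fin.castSucc_injective _ (congrFun this j)).symm
        · rintro rfl; rfl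
      by_cases h : σ = τ
      · simp [hiff, h]
      · rw [if_neg (fun hc => h (hiff.1 hc)), if_neg h, smul_zero]
    rw [Finset.sum_congr rfl (fun σ _ => hcoeffs σ)] at happ
    rw [Finset.sum_ite_eq' Finset.univ τ g] at happ
    simpa using happ
  -- M equals the span of the range of b
  have hMspan : M = Submodule.span K (Set.range b) := by
    rw [hM]
    apply le_antisymm
    · rw [Submodule.span_le]
      intro x hx
      have := mono_mem_span_RS K hx i₀ (Finset.mem_univ _)
      rwa [hRS] at this
    · rw [Submodule.span_le]
      rintro x ⟨σ, rfl⟩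
      apply Submodule.subset_span
      have := rn_isMono K i₀ (wlist σ) (hwlist_nodup σ) (hi₀_not_mem σ)
      rw [hwlist_toFinset σ] at this
      rw [Finset.insert_erase (Finset.mem_univ i₀)] at this
      exact this
  have hfd : FiniteDimensional K M := by
    rw [hMspan]
    exact FiniteDimensional.span_of_finite K (Set.finite_range b)
  refine ⟨hfd, ?_⟩
  rw [hMspan, finrank_span_eq_card hbindep]
  rw [Fintype.card_perm, Fintype.card_fin]
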